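/- Let r ≥ 3 and let G be an (r−1)-admissible decomposition of λK_n into k colors, and let B be a proper k-edge-coloring of μK_n ∖ λK_n. In the union decomposition C = G ∪ B of μK_n, every connected component of every color class contains a vertex of degree at most r−2 or at least two vertices of degree at most r−1. Equivalently, no component C of a color class C(i) satisfies ∑_{v∈V(C)} d_{C(i)}(v) ≥ r·|V(C)| − 1. -/

import Mathlib

variable {V : Type*} [Fintype V] [DecidableEq V]

/-- Degree of a vertex in a multigraph given by an edge-multiplicity function. -/
def deg (c : V → V → ℕ) (v : V) : ℕ := ∑ u, c v u

/-- Reachability in a multigraph given by an edge-multiplicity function. -/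
def Reach (c : V → V → ℕ) (u w : V) : Prop :=
  Relation.ReflTransGen (fun a b => a ≠ b ∧ 0 < c a b) u w

/-- The connected component of `v`. -/
def comp (c : V → V → ℕ) (v : V) : Set V := {u | Reach c v u}

/-- Remove one copy of the edge `ab`. -/
def removeOne (c : V → V → ℕ) (a b : V) : V → V → ℕ :=
  fun u w => if (u = a ∧ w = b) ∨ (u = b ∧ w = a) then c u w - 1 else c u w

/-- First admissibility condition: every vertex has degree at most `r`. -/
def DegCond (r : ℕ) (c : V → V → ℕ) : Prop := ∀ v, deg c v ≤ r

/-- Second admissibility condition: every connected component contains a vertex of degree at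
most `r - 2`, or at least two vertices of degree at most `r - 1`. -/
def CompCond (r : ℕ) (c : V → V → ℕ) : Prop :=
  ∀ v₀, (∃ v ∈ comp c v₀, deg c v ≤ r - 2) ∨
    ∃ v ∈ comp c v₀, ∃ w ∈ comp c v₀, v ≠ w ∧ deg c v ≤ r - 1 ∧ deg c w ≤ r - 1

/-- Third admissibility condition: for every cutedge `ab` of a component (an edge whose
removal makes `b` unreachable from `a`), each of the two resulting components contains a
vertex of degree at most `r - 1` (degrees taken in `c`). -/
def CutCond (r : ℕ) (c : V → V → ℕ) : Prop :=
  ∀ a b, 0 < c a b → ¬ Reach (removeOne c a b) a b →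
    (∃ v ∈ comp (removeOne c a b) a, deg c v ≤ r - 1) ∧
      ∃ v ∈ comp (removeOne c a b) b, deg c v ≤ r - 1

/-- A color class is `r`-admissible if it satisfies the three conditions of
Definition 1.2 of the paper. -/
def Admissible (r : ℕ) (c : V → V → ℕ) : Prop :=
  DegCond r c ∧ CompCond r c ∧ CutCond r c

/-- Let `r ≥ 3`, let `G` be an `(r-1)`-admissible decomposition of `λK_n` into
`k` colors, and let `B` be a proper `k`-edge-coloring of `μK_n ∖ λK_n`.  In the union
decomposition `C = G ∪ B` of `μK_n`, every connected component of every color class contains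
a vertex of degree at most `r - 2`, or at least two vertices of degree at most `r - 1`. -/
theorem stmt9 (n k lam mu r : ℕ) (hr : 3 ≤ r) (hlam : 0 < lam) (hle : lam ≤ mu)
    (G B : Fin k → Fin n → Fin n → ℕ)
    (hGsymm : ∀ i u v, G i u v = G i v u) (hGloop : ∀ i v, G i v v = 0)
    (hGdecomp : ∀ u v, u ≠ v → ∑ i, G i u v = lam)
    (hGadm : ∀ i, Admissible (r - 1) (G i))
    (hBsymm : ∀ i u v, B i u v = B i v u) (hBloop : ∀ i v, B i v v = 0)
    (hBdecomp : ∀ u v, u ≠ v → ∑ i, B i u v = mu - lam)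
    (hBproper : ∀ i v, deg (B i) v ≤ 1) :
    ∀ i : Fin k, CompCond r (fun a b => G i a b + B i a b) := by
  intro i v₀
  have hmono : ∀ u, u ∈ comp (G i) v₀ → u ∈ comp (fun a b => G i a b + B i a b) v₀ := by
    intro u h
    exact Relation.ReflTransGen.mono (r := fun a b => a ≠ b ∧ 0 < G i a b) (p := fun a b => a ≠ b ∧ 0 < G i a b + B i a b) (fun a b (hab : a ≠ b ∧ 0 < G i a b) => (⟨hab.1, Nat.lt_of_lt_of_le hab.2 (Nat.le_add_right _ _)⟩ : a ≠ b ∧ 0 < G i a b + B i a b)) v₀ u h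
  have hdeg : ∀ v, deg (fun a b => G i a b + B i a b) v ≤ deg (G i) v + 1 := by
    intro v
    have h1 : deg (fun a b => G i a b + B i a b) v = deg (G i) v + deg (B i) v := by
      simp [deg, Finset.sum_add_distrib]
    have := hBproper i v
    omega
  rcases (hGadm i).2.1 v₀ with ⟨v, hv, hdv⟩ | ⟨v, hv, w, hw, hvw, hdv, hdw⟩
  · exact Or.inl ⟨v, hmono v hv, by have := hdeg v; omega⟩
  · exact Or.inr ⟨v, hmono v hv, w, hmono w hw, hvw,
      by have := hdeg v; omega, by have := hdeg w; omega⟩
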